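/- arXiv:2009.03484 — 5 statements merged into one kernel-verified Lean document; each statement's English description precedes it below -/
import Mathlib

section
/- Let c, d be positive integers with c ≥ d + 4, and let F be a finite family of open intervals (α,β) with integer endpoints 1 ≤ α < β ≤ c that is non-crossing (any two intervals are disjoint or one contains the other) and whose Hasse diagram under inclusion is a rooted binary tree with root (1,c), satisfying: every node with exactly one child I₁ has length(parent) = length(I₁) + 1, every node with two children I₁, I₂ satisfies I₁ ∩ I₂ = ∅ and length(I₁) + length(I₂) = length(parent), and the leaves are exactly the d + 2 unit intervals {(β,β+1) : β ∈ {α,…,α+ℓ} ∪ {c−d+ℓ−1,…,c−1}} for some α and some ℓ with 2 ≤ ℓ ≤ d+1. Then |F| = c + d. -/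
namespace ScrollComb

/-- Open intervals with integer endpoints, identified with pairs `(a, b)`, `a < b`. -/
abbrev Iv : Type := ℤ × ℤ

/-- `I` is contained in `J` as open real intervals. -/
def Sub (I J : Iv) : Prop := J.1 ≤ I.1 ∧ I.2 ≤ J.2

/-- The length of an interval. -/
def len (I : Iv) : ℤ := I.2 - I.1

/-- Two open intervals with integer endpoints are disjoint. -/
def Disj (I J : Iv) : Prop := I.2 ≤ J.1 ∨ J.2 ≤ I.1

/-- `I` is a child of `J` in the Hasse diagram of `(F, ⊆)`:  `I ⊊ J` and nothing of `F`
lies strictly between them. -/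
def IsChild (F : Finset Iv) (I J : Iv) : Prop :=
  I ∈ F ∧ J ∈ F ∧ Sub I J ∧ I ≠ J ∧
    ∀ K ∈ F, Sub I K → Sub K J → K = I ∨ K = J

/-- `I` is a leaf (a minimal element) of the family `F`. -/
def IsLeaf (F : Finset Iv) (I : Iv) : Prop :=
  I ∈ F ∧ ∀ K ∈ F, Sub K I → K = I

/-- The prescribed leaves set `𝔏_α`: the unit intervals `(β, β+1)` for
`β ∈ {α, …, α+ℓ} ∪ {c-d+ℓ-1, …, c-1}`. -/
noncomputable def leavesSet (c d α ℓ : ℤ) : Finset Iv :=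
  (Finset.Icc α (α + ℓ) ∪ Finset.Icc (c - d + ℓ - 1) (c - 1)).image fun β => (β, β + 1)

/-- The structural conditions on a facet family:  a non-crossing family of open integer
subintervals of `(1, c)` whose Hasse diagram under inclusion is a rooted binary tree with
root `(1, c)`, satisfying the length conditions on nodes with one child resp. two children. -/
structure IsTreeFam (c : ℤ) (F : Finset Iv) : Prop where
  bounds : ∀ I ∈ F, 1 ≤ I.1 ∧ I.1 < I.2 ∧ I.2 ≤ c
  root_mem : ((1 : ℤ), c) ∈ F
  noncrossing : ∀ I ∈ F, ∀ J ∈ F, Disj I J ∨ Sub I J ∨ Sub J I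
  binary : ∀ J ∈ F, {I | IsChild F I J}.ncard ≤ 2
  one_child : ∀ J ∈ F, ∀ I, IsChild F I J → (∀ I', IsChild F I' J → I' = I) →
    len J = len I + 1 ∧ (J.1 < I.1 → (J.1, J.1 + 1) ∉ F) ∧ (I.2 < J.2 → (I.2, I.2 + 1) ∉ F)
  two_children : ∀ J ∈ F, ∀ I₁ I₂, IsChild F I₁ J → IsChild F I₂ J → I₁ ≠ I₂ →
    Disj I₁ I₂ ∧ len I₁ + len I₂ = len J

/-- A facet family with prescribed leaves data `(α, ℓ)`. -/
structure IsScrollFacetWith (c d α ℓ : ℤ) (F : Finset Iv) : Prop where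
  tree : IsTreeFam c F
  α_lb : 1 ≤ α
  α_ub : α ≤ c - d - 2
  ℓ_lb : 2 ≤ ℓ
  ℓ_ub : ℓ ≤ d + 1
  leaves : ∀ I, IsLeaf F I ↔ I ∈ leavesSet c d α ℓ

/-- A facet of the initial complex of the fiber cone of a rational normal scroll. -/
def IsScrollFacet (c d : ℤ) (F : Finset Iv) : Prop :=
  ∃ α ℓ, IsScrollFacetWith c d α ℓ F

section Aux
open scoped Classical

lemma sub_refl (I : Iv) : Sub I I := ⟨le_rfl, le_rfl⟩

lemma sub_trans {I J K : Iv} (h1 : Sub I J) (h2 : Sub J K) : Sub I K :=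
  ⟨h2.1.trans h1.1, h1.2.trans h2.2⟩

lemma sub_antisymm {I J : Iv} (h1 : Sub I J) (h2 : Sub J I) : I = J := by
  obtain ⟨a, b⟩ := h1; obtain ⟨a2, b2⟩ := h2
  exact Prod.ext (le_antisymm a2 a) (le_antisymm b b2)

lemma eq_of_sub_len {I J : Iv} (h : Sub I J) (hl : len J ≤ len I) : I = J := by
  obtain ⟨a, b⟩ := h
  unfold len at hl
  exact Prod.ext (by omega) (by omega)

noncomputable def SJ (F : Finset Iv) (J : Iv) : Finset Iv := F.filter fun K => Sub K J
noncomputable def LJ (F : Finset Iv) (J : Iv) : Finset Iv :=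
  F.filter fun K => IsLeaf F K ∧ Sub K J

lemma mem_SJ {F : Finset Iv} {J K : Iv} : K ∈ SJ F J ↔ K ∈ F ∧ Sub K J := by
  simp [SJ]

lemma mem_LJ {F : Finset Iv} {J K : Iv} : K ∈ LJ F J ↔ K ∈ F ∧ IsLeaf F K ∧ Sub K J := by
  simp [LJ]

lemma exists_child {F : Finset Iv} {J K : Iv} (hK : K ∈ F) (hJ : J ∈ F)
    (hsub : Sub K J) (hne : K ≠ J) : ∃ M, IsChild F M J ∧ Sub K M := by
  set T := F.filter (fun M => Sub K M ∧ Sub M J ∧ M ≠ J) with hTdef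
  have hKT : K ∈ T := by simp [hTdef, hK, sub_refl, hsub, hne]
  obtain ⟨M, hMT, hmax⟩ := T.exists_max_image len ⟨K, hKT⟩
  simp only [hTdef, Finset.mem_filter] at hMT
  obtain ⟨hMF, hKM, hMJ, hMne⟩ := hMT
  refine ⟨M, ⟨hMF, hJ, hMJ, hMne, ?_⟩, hKM⟩
  intro K' hK' h1 h2
  by_cases hKJ' : K' = J
  · exact Or.inr hKJ'
  · left
    have hK'T : K' ∈ T := by
      simp only [hTdef, Finset.mem_filter]
      exact ⟨hK', sub_trans hKM h1, h2, hKJ'⟩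
    exact (eq_of_sub_len h1 (hmax K' hK'T)).symm

lemma disj_not_sub {c : ℤ} {F : Finset Iv} (hT : IsTreeFam c F) {I₁ I₂ K : Iv}
    (hK : K ∈ F) (hd : Disj I₁ I₂) (h1 : Sub K I₁) (h2 : Sub K I₂) : False := by
  have hb := (hT.bounds K hK).2.1
  obtain ⟨a1, b1⟩ := h1; obtain ⟨a2, b2⟩ := h2
  rcases hd with h | h <;> omega

lemma SJ_card_lt {F : Finset Iv} {J M : Iv} (hM : IsChild F M J) :
    (SJ F M).card < (SJ F J).card := by
  apply Finset.card_lt_card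
  constructor
  · intro K hK
    rw [mem_SJ] at hK ⊢
    exact ⟨hK.1, sub_trans hK.2 hM.2.2.1⟩
  · intro hsub
    have hJ : J ∈ SJ F J := mem_SJ.2 ⟨hM.2.1, sub_refl _⟩
    have := mem_SJ.1 (hsub hJ)
    exact hM.2.2.2.1 (sub_antisymm this.2 hM.2.2.1).symm

lemma subtree_card {c : ℤ} {F : Finset Iv} (hT : IsTreeFam c F)
    (hlen1 : ∀ L ∈ F, (∀ K ∈ F, Sub K L → K = L) → len L = 1) :
    ∀ n : ℕ, ∀ J ∈ F, (SJ F J).card ≤ n →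
      ((SJ F J).card : ℤ) = len J + ((LJ F J).card : ℤ) - 1 := by
  intro n
  induction n with
  | zero =>
    intro J hJ hcard
    exfalso
    have hJS : J ∈ SJ F J := mem_SJ.2 ⟨hJ, sub_refl _⟩
    have := Finset.card_pos.2 ⟨J, hJS⟩
    omega
  | succ n ih =>
    intro J hJ hcard
    by_cases hleaf : ∀ K ∈ F, Sub K J → K = J
    · have hSJ : SJ F J = {J} := by
        ext K
        simp only [mem_SJ, Finset.mem_singleton]
        constructor
        · rintro ⟨hKF, hKs⟩; exact hleaf K hKF hKs
        · rintro rfl; exact ⟨hJ, sub_refl _⟩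
      have hLJ : LJ F J = {J} := by
        ext K
        simp only [mem_LJ, Finset.mem_singleton]
        constructor
        · rintro ⟨hKF, _, hKs⟩; exact hleaf K hKF hKs
        · rintro rfl; exact ⟨hJ, ⟨hJ, hleaf⟩, sub_refl _⟩
      rw [hSJ, hLJ, hlen1 J hJ hleaf]
      simp
    · push_neg at hleaf
      obtain ⟨K₀, hK₀F, hK₀s, hK₀ne⟩ := hleaf
      obtain ⟨M, hM, _⟩ := exists_child hK₀F hJ hK₀s hK₀ne
      have hJnotleaf : ¬ IsLeaf F J := by
        rintro ⟨_, hmin⟩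
        exact hM.2.2.2.1 (hmin M hM.1 hM.2.2.1)
      by_cases huniq : ∀ I', IsChild F I' J → I' = M
      · -- one child
        have hlenJ : len J = len M + 1 := (hT.one_child J hJ M hM huniq).1
        have hJM : J ∉ SJ F M := by
          intro hmem
          exact hM.2.2.2.1 (sub_antisymm (mem_SJ.1 hmem).2 hM.2.2.1).symm
        have hSJ : SJ F J = insert J (SJ F M) := by
          ext K
          simp only [mem_SJ, Finset.mem_insert]
          constructor
          · rintro ⟨hKF, hKs⟩
            by_cases hKJ : K = J
            · exact Or.inl hKJ
            · obtain ⟨M', hM', hKM'⟩ := exists_child hKF hJ hKs hKJ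
              exact Or.inr ⟨hKF, huniq M' hM' ▸ hKM'⟩
          · rintro (rfl | ⟨hKF, hKs⟩)
            · exact ⟨hJ, sub_refl _⟩
            · exact ⟨hKF, sub_trans hKs hM.2.2.1⟩
        have hLJ : LJ F J = LJ F M := by
          ext K
          simp only [mem_LJ]
          constructor
          · rintro ⟨hKF, hKleaf, hKs⟩
            have hKJ : K ≠ J := by rintro rfl; exact hJnotleaf hKleaf
            obtain ⟨M', hM', hKM'⟩ := exists_child hKF hJ hKs hKJ
            exact ⟨hKF, hKleaf, huniq M' hM' ▸ hKM'⟩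
          · rintro ⟨hKF, hKleaf, hKs⟩
            exact ⟨hKF, hKleaf, sub_trans hKs hM.2.2.1⟩
        have hcM : (SJ F M).card ≤ n := by
          have := SJ_card_lt hM
          omega
        have ihM := ih M hM.1 hcM
        rw [hSJ, hLJ, Finset.card_insert_of_notMem hJM]
        push_cast
        omega
      · -- two children
        push_neg at huniq
        obtain ⟨M₂, hM₂, hMne⟩ := huniq
        obtain ⟨hd, hsum⟩ := hT.two_children J hJ M₂ M hM₂ hM hMne
        have hchild2 : ∀ I, IsChild F I J → I = M ∨ I = M₂ := by
          intro I hI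
          by_contra hcon
          push_neg at hcon
          obtain ⟨h1, h2⟩ := hcon
          have hfin : {I' | IsChild F I' J}.Finite :=
            Set.Finite.subset F.finite_toSet (fun x hx => hx.1)
          have hsubset : (↑({I, M, M₂} : Finset Iv) : Set Iv) ⊆ {I' | IsChild F I' J} := by
            intro x hx
            simp only [Finset.coe_insert, Set.mem_insert_iff, Finset.coe_singleton,
              Set.mem_singleton_iff] at hx
            rcases hx with rfl | rfl | rfl <;> assumption
          have h3 : ({I, M, M₂} : Finset Iv).card = 3 := by
            rw [Finset.card_insert_of_notMem (by simp [h1, h2]),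
              Finset.card_insert_of_notMem (by simp [Ne.symm hMne])]
            simp
          have hle : ({I, M, M₂} : Finset Iv).card ≤ 2 := by
            calc ({I, M, M₂} : Finset Iv).card
                = (↑({I, M, M₂} : Finset Iv) : Set Iv).ncard := (Set.ncard_coe_finset _).symm
              _ ≤ {I' | IsChild F I' J}.ncard := Set.ncard_le_ncard hsubset hfin
              _ ≤ 2 := hT.binary J hJ
          omega
        have hJM : J ∉ SJ F M ∪ SJ F M₂ := by
          intro hmem
          rcases Finset.mem_union.1 hmem with hm | hm
          · exact hM.2.2.2.1 (sub_antisymm (mem_SJ.1 hm).2 hM.2.2.1).symm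
          · exact hM₂.2.2.2.1 (sub_antisymm (mem_SJ.1 hm).2 hM₂.2.2.1).symm
        have hdisj : Disjoint (SJ F M) (SJ F M₂) := by
          rw [Finset.disjoint_left]
          intro K h1 h2
          exact disj_not_sub hT (mem_SJ.1 h1).1 hd (mem_SJ.1 h2).2 (mem_SJ.1 h1).2
        have hSJ : SJ F J = insert J (SJ F M ∪ SJ F M₂) := by
          ext K
          simp only [mem_SJ, Finset.mem_insert, Finset.mem_union]
          constructor
          · rintro ⟨hKF, hKs⟩
            by_cases hKJ : K = J
            · exact Or.inl hKJ
            · obtain ⟨M', hM', hKM'⟩ := exists_child hKF hJ hKs hKJ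
              rcases hchild2 M' hM' with rfl | rfl
              · exact Or.inr (Or.inl ⟨hKF, hKM'⟩)
              · exact Or.inr (Or.inr ⟨hKF, hKM'⟩)
          · rintro (rfl | ⟨hKF, hKs⟩ | ⟨hKF, hKs⟩)
            · exact ⟨hJ, sub_refl _⟩
            · exact ⟨hKF, sub_trans hKs hM.2.2.1⟩
            · exact ⟨hKF, sub_trans hKs hM₂.2.2.1⟩
        have hLJ : LJ F J = LJ F M ∪ LJ F M₂ := by
          ext K
          simp only [mem_LJ, Finset.mem_union]
          constructor
          · rintro ⟨hKF, hKleaf, hKs⟩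
            have hKJ : K ≠ J := by rintro rfl; exact hJnotleaf hKleaf
            obtain ⟨M', hM', hKM'⟩ := exists_child hKF hJ hKs hKJ
            rcases hchild2 M' hM' with rfl | rfl
            · exact Or.inl ⟨hKF, hKleaf, hKM'⟩
            · exact Or.inr ⟨hKF, hKleaf, hKM'⟩
          · rintro (⟨hKF, hKleaf, hKs⟩ | ⟨hKF, hKleaf, hKs⟩)
            · exact ⟨hKF, hKleaf, sub_trans hKs hM.2.2.1⟩
            · exact ⟨hKF, hKleaf, sub_trans hKs hM₂.2.2.1⟩
        have hLdisj : Disjoint (LJ F M) (LJ F M₂) := by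
          rw [Finset.disjoint_left]
          intro K h1 h2
          exact disj_not_sub hT (mem_LJ.1 h1).1 hd (mem_LJ.1 h2).2.2 (mem_LJ.1 h1).2.2
        have hcM : (SJ F M).card ≤ n := by have := SJ_card_lt hM; omega
        have hcM₂ : (SJ F M₂).card ≤ n := by have := SJ_card_lt hM₂; omega
        have ihM := ih M hM.1 hcM
        have ihM₂ := ih M₂ hM₂.1 hcM₂
        rw [hSJ, hLJ, Finset.card_insert_of_notMem hJM,
          Finset.card_union_of_disjoint hdisj, Finset.card_union_of_disjoint hLdisj]
        push_cast
        omega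

end Aux

section Final
open scoped Classical

lemma card_leavesSet {c d α ℓ : ℤ} (hα : α ≤ c - d - 2) (hℓ1 : 2 ≤ ℓ) (hℓ2 : ℓ ≤ d + 1) :
    ((leavesSet c d α ℓ).card : ℤ) = d + 2 := by
  unfold leavesSet
  have hinj : Function.Injective (fun β : ℤ => ((β, β + 1) : Iv)) := by
    intro a b h
    simpa using congrArg Prod.fst h
  rw [Finset.card_image_of_injective _ hinj]
  rw [Finset.card_union_of_disjoint]
  · rw [Int.card_Icc, Int.card_Icc]
    push_cast
    omega
  · rw [Finset.disjoint_left]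
    intro b hb1 hb2
    simp only [Finset.mem_Icc] at hb1 hb2
    omega

/-- If `c ≥ d + 4` and `F` is a family of open integer intervals in `(1,c)`
satisfying the binary-tree facet conditions with leaves the prescribed `d + 2` unit
intervals, then `|F| = c + d`. -/
theorem card_of_isScrollFacet (c d : ℤ) (hd : 1 ≤ d) (hc : d + 4 ≤ c)
    (F : Finset Iv) (hF : IsScrollFacet c d F) :
    (F.card : ℤ) = c + d := by
  obtain ⟨α, ℓ, h⟩ := hF
  have hT := h.tree
  have hlen1 : ∀ L ∈ F, (∀ K ∈ F, Sub K L → K = L) → len L = 1 := by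
    intro L hL hmin
    have hmem : L ∈ leavesSet c d α ℓ := (h.leaves L).1 ⟨hL, hmin⟩
    simp only [leavesSet, Finset.mem_image] at hmem
    obtain ⟨β, _, rfl⟩ := hmem
    simp [len]
  have hroot : SJ F (1, c) = F := by
    ext K
    simp only [mem_SJ, and_iff_left_iff_imp]
    intro hK
    exact ⟨(hT.bounds K hK).1, (hT.bounds K hK).2.2⟩
  have hLroot : LJ F (1, c) = leavesSet c d α ℓ := by
    ext K
    simp only [mem_LJ]
    constructor
    · rintro ⟨_, hKleaf, _⟩
      exact (h.leaves K).1 hKleaf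
    · intro hK
      have hKleaf : IsLeaf F K := (h.leaves K).2 hK
      exact ⟨hKleaf.1, hKleaf, (hT.bounds K hKleaf.1).1, (hT.bounds K hKleaf.1).2.2⟩
  have key := subtree_card hT hlen1 (SJ F (1, c)).card (1, c) hT.root_mem le_rfl
  rw [hroot, hLroot, card_leavesSet h.α_ub h.ℓ_lb h.ℓ_ub] at key
  simp only [len] at key
  omega

end Final

end ScrollComb
end

section
/- Let F be a finite family of integer intervals satisfying the facet conditions (binary tree rooted at (1,c), leaves a prescribed set of unit intervals, conditions on children lengths). If an open interval (α,β) with 1 ≤ α < β ≤ c contains no leaf of the tree of F (i.e., contains none of the prescribed unit intervals), then (α,β) ∉ F. -/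
namespace ScrollComb

/-- If an open interval `(a,b) ⊆ (1,c)` contains no leaf of the tree of a
facet family `F`, then `(a,b) ∉ F`. -/
theorem not_mem_of_no_leaf (c d : ℤ) (F : Finset Iv) (hF : IsScrollFacet c d F)
    (a b : ℤ) (ha : 1 ≤ a) (hab : a < b) (hb : b ≤ c)
    (hnoleaf : ∀ L : Iv, IsLeaf F L → ¬ Sub L (a, b)) :
    (a, b) ∉ F := by
  intro hmem
  classical
  have hS : (a, b) ∈ F.filter (fun K => Sub K (a, b)) := by
    exact Finset.mem_filter.mpr ⟨hmem, le_refl _, le_refl _⟩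
  obtain ⟨K, hK, hKmin⟩ := Finset.exists_min_image _ len ⟨_, hS⟩
  rw [Finset.mem_filter] at hK
  obtain ⟨hKF, hKsub⟩ := hK
  refine hnoleaf K ⟨hKF, fun K' hK' hsub => ?_⟩ hKsub
  have hsub2 : Sub K' (a, b) := ⟨le_trans hKsub.1 hsub.1, le_trans hsub.2 hKsub.2⟩
  have hmin : len K ≤ len K' := hKmin K' (Finset.mem_filter.mpr ⟨hK', hsub2⟩)
  obtain ⟨h1, h2⟩ := hsub
  have e1 : K'.1 = K.1 := by unfold len at hmin; omega
  have e2 : K'.2 = K.2 := by unfold len at hmin; omega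
  exact Prod.ext e1 e2

end ScrollComb
end

section
/- Let F be a finite family of integer intervals satisfying the facet conditions, and suppose the unit interval (γ,γ+1) with 1 ≤ γ < c is not a leaf of the tree of F. Then the smallest interval of F containing (γ,γ+1) is of the form (γ′,γ+1) or (γ,γ′) for some integer γ′, and it has a unique child in the tree, namely (γ′,γ) or (γ+1,γ′) respectively. -/
namespace ScrollComb

/-- If the unit interval `(γ,γ+1)`, `1 ≤ γ < c`, is not a leaf of the tree
of a facet family `F`, then the smallest interval of `F` containing `(γ,γ+1)` has the form
`(γ',γ+1)` or `(γ,γ')`, and it has a unique child, namely `(γ',γ)` resp. `(γ+1,γ')`. -/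
theorem smallest_containing_not_leaf (c d : ℤ) (F : Finset Iv) (hF : IsScrollFacet c d F)
    (γ : ℤ) (hγ : 1 ≤ γ) (hγc : γ + 1 ≤ c) (hnotleaf : ¬ IsLeaf F (γ, γ + 1))
    (J : Iv) (hJF : J ∈ F) (hJ : Sub (γ, γ + 1) J)
    (hmin : ∀ K ∈ F, Sub (γ, γ + 1) K → Sub J K) :
    ∃ γ' : ℤ,
      (J = (γ', γ + 1) ∧ IsChild F (γ', γ) J ∧ ∀ I, IsChild F I J → I = (γ', γ)) ∨
      (J = (γ, γ') ∧ IsChild F (γ + 1, γ') J ∧ ∀ I, IsChild F I J → I = (γ + 1, γ')) := by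
  classical
  obtain ⟨α, ℓ, hS⟩ := hF
  have hbJ := hS.tree.bounds J hJF
  have hJ1 : J.1 ≤ γ := hJ.1
  have hJ2 : γ + 1 ≤ J.2 := hJ.2
  -- J ≠ (γ, γ+1)
  have hJne : J ≠ (γ, γ + 1) := by
    rintro rfl
    refine hnotleaf ⟨hJF, fun K hK hsub => ?_⟩
    have hb := hS.tree.bounds K hK
    have h1 : γ ≤ K.1 := hsub.1
    have h2 : K.2 ≤ γ + 1 := hsub.2
    obtain ⟨a, b⟩ := K
    simp only [Prod.mk.injEq]
    simp only at h1 h2 hb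
    omega
  -- antisymmetry of Sub
  have anti : ∀ I K : Iv, Sub I K → Sub K I → I = K := by
    intro I K h1 h2
    obtain ⟨a, b⟩ := I; obtain ⟨a', b'⟩ := K
    simp only [Sub] at h1 h2
    simp only [Prod.mk.injEq]
    omega
  -- J is not a leaf
  have hJnl : ¬ IsLeaf F J := by
    intro hL
    rw [hS.leaves] at hL
    obtain ⟨β, hβ, hβeq⟩ := Finset.mem_image.mp hL
    apply hJne
    rw [← hβeq] at hJ1 hJ2 ⊢
    simp only at hJ1 hJ2
    simp only [Prod.mk.injEq]
    omega
  -- J has a child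
  have hex : ∃ K ∈ F, Sub K J ∧ K ≠ J := by
    by_contra h
    push_neg at h
    exact hJnl ⟨hJF, h⟩
  have hSne : (F.filter (fun K => Sub K J ∧ K ≠ J)).Nonempty := by
    obtain ⟨K, hK, h1, h2⟩ := hex
    exact ⟨K, Finset.mem_filter.mpr ⟨hK, h1, h2⟩⟩
  obtain ⟨I₀, hI₀mem, hI₀max⟩ :=
    Finset.exists_max_image (F.filter (fun K => Sub K J ∧ K ≠ J)) len hSne
  obtain ⟨hI₀F, hI₀sub, hI₀ne⟩ := Finset.mem_filter.mp hI₀mem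
  have hchild : IsChild F I₀ J := by
    refine ⟨hI₀F, hJF, hI₀sub, hI₀ne, fun K hK h1 h2 => ?_⟩
    by_cases hKJ : K = J
    · exact Or.inr hKJ
    · left
      have hKmem : K ∈ F.filter (fun K => Sub K J ∧ K ≠ J) :=
        Finset.mem_filter.mpr ⟨hK, h2, hKJ⟩
      have hlen := hI₀max K hKmem
      obtain ⟨x1, x2⟩ := h1
      obtain ⟨a, b⟩ := K; obtain ⟨a', b'⟩ := I₀
      simp only [len] at hlen
      simp only at x1 x2
      simp only [Prod.mk.injEq]
      omega
  -- every child of J is disjoint from (γ, γ+1)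
  have hdisj : ∀ I, IsChild F I J → I.2 ≤ γ ∨ γ + 1 ≤ I.1 := by
    intro I hI
    obtain ⟨hIF, _, hsub, hne, _⟩ := hI
    by_contra h
    push_neg at h
    have hcon : Sub (γ, γ + 1) I := ⟨show I.1 ≤ γ by omega, show γ + 1 ≤ I.2 by omega⟩
    exact hne (anti I J hsub (hmin I hIF hcon))
  -- J has no two distinct children
  have notwo : ∀ I₁ I₂, IsChild F I₁ J → IsChild F I₂ J → I₁ = I₂ := by
    intro I₁ I₂ h1 h2
    by_contra hne
    obtain ⟨hd, hl⟩ := hS.tree.two_children J hJF I₁ I₂ h1 h2 hne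
    have hb1 := hS.tree.bounds I₁ h1.1
    have hb2 := hS.tree.bounds I₂ h2.1
    have hs1 := h1.2.2.1
    have hs2 := h2.2.2.1
    have hd1 := hdisj I₁ h1
    have hd2 := hdisj I₂ h2
    obtain ⟨u1, u2⟩ := hs1
    obtain ⟨v1, v2⟩ := hs2
    simp only [Disj] at hd
    simp only [len] at hl
    omega
  -- unique child: I₀
  have huniq : ∀ I, IsChild F I J → I = I₀ := fun I hI => notwo I I₀ hI hchild
  obtain ⟨hlen, -, -⟩ := hS.tree.one_child J hJF I₀ hchild huniq
  have hb0 := hS.tree.bounds I₀ hchild.1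
  have hs0 := hchild.2.2.1
  obtain ⟨w1, w2⟩ := hs0
  have hd0 := hdisj I₀ hchild
  simp only [len] at hlen
  -- case analysis
  rcases hd0 with hd0 | hd0
  · -- I₀ = (J.1, γ), J = (J.1, γ+1)
    refine ⟨J.1, Or.inl ⟨?_, ?_, ?_⟩⟩
    · obtain ⟨a, b⟩ := J
      simp only [Prod.mk.injEq]
      simp only at hJ1 hJ2 w1 w2 hlen
      exact ⟨trivial, by omega⟩
    · have : I₀ = (J.1, γ) := by
        obtain ⟨a', b'⟩ := I₀
        simp only [Prod.mk.injEq]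
        simp only at w1 w2 hb0 hd0 hlen
        omega
      rwa [this] at hchild
    · intro I hI
      have h1 := huniq I hI
      have : I₀ = (J.1, γ) := by
        obtain ⟨a', b'⟩ := I₀
        simp only [Prod.mk.injEq]
        simp only at w1 w2 hb0 hd0 hlen
        omega
      rw [h1, this]
  · -- I₀ = (γ+1, J.2), J = (γ, J.2)
    have hJγ : J.1 = γ := by omega
    refine ⟨J.2, Or.inr ⟨?_, ?_, ?_⟩⟩
    · obtain ⟨a, b⟩ := J
      simp only [Prod.mk.injEq]
      simp only at hJγ
      exact ⟨hJγ, trivial⟩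
    · have : I₀ = (γ + 1, J.2) := by
        obtain ⟨a', b'⟩ := I₀
        simp only [Prod.mk.injEq]
        simp only at w1 w2 hb0 hd0 hlen
        omega
      rwa [this] at hchild
    · intro I hI
      have h1 := huniq I hI
      have : I₀ = (γ + 1, J.2) := by
        obtain ⟨a', b'⟩ := I₀
        simp only [Prod.mk.injEq]
        simp only at w1 w2 hb0 hd0 hlen
        omega
      rw [h1, this]

end ScrollComb
end

section
/- Let n₁ ≤ … ≤ n_d be positive integers with c = n₁ + ⋯ + n_d. For α ∈ [c−d−2] and i ∈ [d], let γ_{α,i} be the least index γ ≥ α+2 such that the γ-th column of the rearranged scroll matrix M involves variables from the i-th block. Define the leaves set 𝔏_α = {(β,β+1) : β ∈ {α,…,α+ℓ_α} ∪ {c−d+ℓ_α−1,…,c−1}} where ℓ_α is determined by {γ_{α,1},…,γ_{α,d}} = {α+2,…,α+ℓ_α} ⊔ {c−d+ℓ_α,…,c}. Then for each α ∈ [c−d−3], |𝔏_α \ 𝔏_{α+1}| = |𝔏_{α+1} \ 𝔏_α| = 1; moreover 𝔏_α \ 𝔏_{α+1} = {(α,α+1)}. -/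
namespace ScrollLeaves

/-- The prescribed leaves set `𝔏_α`: the unit intervals `(β, β+1)` for
`β ∈ {α, …, α+ℓ} ∪ {c-d+ℓ-1, …, c-1}`. -/
noncomputable def leavesSet (c d α ℓ : ℤ) : Finset (ℤ × ℤ) :=
  (Finset.Icc α (α + ℓ) ∪ Finset.Icc (c - d + ℓ - 1) (c - 1)).image fun β => (β, β + 1)

variable {d : ℕ} (n : Fin d → ℕ)

/-- The (1-based) position, among the first `c - d` columns of the rearranged scroll matrix
`M`, of the column which is the `j`-th column (0-based, `j ≤ nᵢ - 2`) of the `i`-th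
catalecticant block:  one lists, for `j = 0, 1, 2, …`, the `j`-th columns of the blocks
having at least `j + 2` columns, in increasing order of the block index. -/
def colPos (j : ℤ) (i : Fin d) : ℤ :=
  (∑ i' : Fin d, min j ((n i' : ℤ) - 1)) +
    ((Finset.univ.filter fun i' : Fin d => i' ≤ i ∧ j + 2 ≤ (n i' : ℤ)).card : ℤ)

/-- Column `γ` (1-based) of the rearranged scroll matrix `M` involves variables from the
`i`-th block.  The first `c - d` columns are as in `colPos`; the last `d` columns are the
last columns of the blocks `d, d-1, …, 1` in decreasing order of the block index. -/
def UsesBlock (c : ℤ) (γ : ℤ) (i : Fin d) : Prop :=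
  (γ ≤ c - d ∧ ∃ j : ℤ, 0 ≤ j ∧ j + 2 ≤ (n i : ℤ) ∧ γ = colPos n j i) ∨
  (c - d < γ ∧ γ ≤ c ∧ (i : ℤ) + 1 = c + 1 - γ)

/-- Let `n₁ ≤ … ≤ n_d ≥ 1`, `c = n₁ + ⋯ + n_d`.  For `α ∈ [c-d-2]` and
`i ∈ [d]` let `γ α i` be the least `γ ≥ α + 2` such that column `γ` of `M` involves
variables of the `i`-th block, and let `ℓ α` be determined by
`{γ α 1, …, γ α d} = {α+2, …, α+ℓ α} ⊔ {c-d+ℓ α, …, c}`.  Then for `α ∈ [c-d-3]` the leaves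
sets satisfy `|𝔏_α \ 𝔏_{α+1}| = |𝔏_{α+1} \ 𝔏_α| = 1` and `𝔏_α \ 𝔏_{α+1} = {(α, α+1)}`. -/
theorem leavesSet_succ_diff
    (hd : 1 ≤ d) (hn : ∀ i, 1 ≤ n i) (hmono : Monotone n)
    (c : ℤ) (hc : c = ∑ i, (n i : ℤ))
    (γ : ℤ → Fin d → ℤ)
    (hγ : ∀ α : ℤ, 1 ≤ α → α ≤ c - d - 2 → ∀ i : Fin d,
      IsLeast {g : ℤ | α + 2 ≤ g ∧ UsesBlock n c g i} (γ α i))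
    (ℓ : ℤ → ℤ)
    (hℓ : ∀ α : ℤ, 1 ≤ α → α ≤ c - d - 2 →
      2 ≤ ℓ α ∧ ℓ α ≤ d + 1 ∧
      (Finset.Icc (α + 2) (α + ℓ α) ∪ Finset.Icc (c - d + ℓ α) c : Finset ℤ) =
        Finset.image (γ α) Finset.univ ∧
      Disjoint (Finset.Icc (α + 2) (α + ℓ α)) (Finset.Icc (c - d + ℓ α) c)) :
    ∀ α : ℤ, 1 ≤ α → α ≤ c - d - 3 →
      (leavesSet c d α (ℓ α) \ leavesSet c d (α + 1) (ℓ (α + 1))).card = 1 ∧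
      (leavesSet c d (α + 1) (ℓ (α + 1)) \ leavesSet c d α (ℓ α)).card = 1 ∧
      leavesSet c d α (ℓ α) \ leavesSet c d (α + 1) (ℓ (α + 1)) = {(α, α + 1)} := by
  intro α hα1 hα2
  have hα2' : α ≤ c - d - 2 := by omega
  have hα1' : (1 : ℤ) ≤ α + 1 := by omega
  have hα2'' : α + 1 ≤ c - d - 2 := by omega
  obtain ⟨hl2, hld, hSα, hdisj⟩ := hℓ α hα1 hα2'
  obtain ⟨hl2', hld', hSα', hdisj'⟩ := hℓ (α + 1) hα1' hα2''
  set L := ℓ α with hLdef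
  set L' := ℓ (α + 1) with hL'def
  -- injectivity of γ α
  have hcardU : (Finset.Icc (α + 2) (α + L) ∪ Finset.Icc (c - d + L) c).card = d := by
    rw [Finset.card_union_of_disjoint hdisj, Int.card_Icc, Int.card_Icc]
    omega
  have hinj : Function.Injective (γ α) := by
    have h1 : (Finset.image (γ α) Finset.univ).card = (Finset.univ : Finset (Fin d)).card := by
      rw [← hSα, hcardU, Finset.card_univ, Fintype.card_fin]
    have h2 := Finset.injOn_of_card_image_eq h1
    intro a b hab
    exact h2 (Finset.mem_coe.mpr (Finset.mem_univ a)) (Finset.mem_coe.mpr (Finset.mem_univ b)) hab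
  -- the block realizing the minimal value α + 2
  have hmem : α + 2 ∈ Finset.image (γ α) Finset.univ := by
    rw [← hSα]
    simp only [Finset.mem_union, Finset.mem_Icc]
    omega
  obtain ⟨i₀, -, hi₀⟩ := Finset.mem_image.mp hmem
  have key : ∀ i, γ α i ≠ α + 2 → γ (α + 1) i = γ α i := by
    intro i hne
    have h1 := hγ α hα1 hα2' i
    have h2 := hγ (α + 1) hα1' hα2'' i
    have hge : α + 1 + 2 ≤ γ α i := by
      have := h1.1.1
      omega
    have hle : γ (α + 1) i ≤ γ α i := h2.2 ⟨hge, h1.1.2⟩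
    have hge2 : γ α i ≤ γ (α + 1) i := h1.2 ⟨by have := h2.1.1; omega, h2.1.2⟩
    omega
  have memS' : ∀ x : ℤ, ((α + 3 ≤ x ∧ x ≤ α + 1 + L') ∨ (c - d + L' ≤ x ∧ x ≤ c)) →
      x = γ (α + 1) i₀ ∨ ((α + 2 ≤ x ∧ x ≤ α + L) ∨ (c - d + L ≤ x ∧ x ≤ c)) := by
    intro x hx
    have hx' : x ∈ Finset.image (γ (α + 1)) Finset.univ := by
      rw [← hSα']
      simp only [Finset.mem_union, Finset.mem_Icc]
      omega
    obtain ⟨i, -, hi⟩ := Finset.mem_image.mp hx'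
    by_cases h : i = i₀
    · exact Or.inl (by rw [← hi, h])
    · have hne : γ α i ≠ α + 2 := fun he => h (hinj (he.trans hi₀.symm))
      have hxm : x ∈ Finset.Icc (α + 2) (α + L) ∪ Finset.Icc (c - d + L) c := by
        rw [hSα]
        exact Finset.mem_image.mpr ⟨i, Finset.mem_univ i, by rw [← key i hne]; exact hi⟩
      right
      simpa only [Finset.mem_union, Finset.mem_Icc] using hxm
  -- the two key inequalities: ℓ α - 1 ≤ ℓ (α+1) ≤ ℓ α
  have hub : L' ≤ L := by
    by_contra h
    push_neg at h
    have h1 := memS' (α + L + 1) (by omega)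
    have h2 := memS' (α + L + 2) (by omega)
    omega
  have hlb : L - 1 ≤ L' := by
    by_contra h
    push_neg at h
    have h1 := memS' (c - d + L - 2) (by omega)
    have h2 := memS' (c - d + L - 1) (by omega)
    omega
  -- now the purely combinatorial conclusion
  have hf : Function.Injective (fun β : ℤ => (β, β + 1)) := fun a b h => by
    simpa using congrArg Prod.fst h
  set A := Finset.Icc α (α + L) ∪ Finset.Icc (c - d + L - 1) (c - 1) with hA
  set B := Finset.Icc (α + 1) (α + 1 + L') ∪ Finset.Icc (c - d + L' - 1) (c - 1) with hB
  have e1 : leavesSet c d α L \ leavesSet c d (α + 1) L' =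
      (A \ B).image (fun β : ℤ => (β, β + 1)) := (Finset.image_sdiff A B hf).symm
  have e2 : leavesSet c d (α + 1) L' \ leavesSet c d α L =
      (B \ A).image (fun β : ℤ => (β, β + 1)) := (Finset.image_sdiff B A hf).symm
  have hAB : A \ B = {α} := by
    ext x
    simp only [hA, hB, Finset.mem_sdiff, Finset.mem_union, Finset.mem_Icc,
      Finset.mem_singleton]
    omega
  have hBA : B \ A = {if L' = L then α + 1 + L else c - d + L - 2} := by
    have hcase : L' = L ∨ L' = L - 1 := by omega
    rcases hcase with hc' | hc'
    · rw [if_pos hc']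
      ext x
      simp only [hB, hA, hc', Finset.mem_sdiff, Finset.mem_union, Finset.mem_Icc,
        Finset.mem_singleton]
      omega
    · rw [if_neg (by omega)]
      ext x
      simp only [hB, hA, hc', Finset.mem_sdiff, Finset.mem_union, Finset.mem_Icc,
        Finset.mem_singleton]
      omega
  refine ⟨?_, ?_, ?_⟩
  · rw [e1, hAB, Finset.image_singleton, Finset.card_singleton]
  · rw [e2, hBA, Finset.image_singleton, Finset.card_singleton]
  · rw [e1, hAB, Finset.image_singleton]

end ScrollLeaves
end

section
/- If I^∨, the Alexander dual of the Stanley–Reisner ideal of a simplicial complex Δ, has linear quotients, then Δ is shellable. -/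
section IdealResolution

variable {K : Type} [Field K] (σ : Type)

/-- A graded free resolution of a homogeneous ideal `I` of the polynomial ring
`MvPolynomial σ K`:  an exact complex of finite free modules augmented onto `I ⊆ S`, where
the basis element `a` of the `i`-th free module has internal degree `δ i a` and all maps
have homogeneous entries of the appropriate degrees. -/
structure IdealGFR (I : Ideal (MvPolynomial σ K)) where
  ι : ℕ → Type
  fin : ∀ i, Fintype (ι i)
  δ : ∀ i, ι i → ℤ
  d : ∀ i, (ι (i + 1) →₀ MvPolynomial σ K) →ₗ[MvPolynomial σ K] (ι i →₀ MvPolynomial σ K)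
  aug : (ι 0 →₀ MvPolynomial σ K) →ₗ[MvPolynomial σ K] MvPolynomial σ K
  aug_range : LinearMap.range aug = I
  exact_zero : LinearMap.range (d 0) = LinearMap.ker aug
  exact_succ : ∀ i, LinearMap.range (d (i + 1)) = LinearMap.ker (d i)
  homog : ∀ i (a : ι (i + 1)) (b : ι i),
    d i (Finsupp.single a 1) b = 0 ∨
      ∃ m : ℕ, (m : ℤ) = δ (i + 1) a - δ i b ∧
        d i (Finsupp.single a 1) b ∈ MvPolynomial.homogeneousSubmodule σ K m
  homog_aug : ∀ a : ι 0,
    aug (Finsupp.single a 1) = 0 ∨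
      ∃ m : ℕ, (m : ℤ) = δ 0 a ∧
        aug (Finsupp.single a 1) ∈ MvPolynomial.homogeneousSubmodule σ K m

/-- The ideal `I` is generated in the single degree `dd`. -/
def GeneratedInDegree (I : Ideal (MvPolynomial σ K)) (dd : ℕ) : Prop :=
  I = Ideal.span {f | f ∈ I ∧ f ∈ MvPolynomial.homogeneousSubmodule σ K dd}

/-- The ideal `I` has a linear resolution:  it is generated in a single degree `dd` and
admits a graded free resolution whose `i`-th free module is generated in degrees
`≤ dd + i` (equivalently, its minimal graded free resolution is linear). -/
def HasLinearResolution (I : Ideal (MvPolynomial σ K)) : Prop :=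
  ∃ dd : ℕ, GeneratedInDegree σ I dd ∧
    ∃ F : IdealGFR σ I, ∀ i (a : F.ι i), F.δ i a ≤ dd + i

/-- A monomial ideal has linear quotients:  there is an ordering `u 0, …, u (m-1)` of its
minimal monomial generators such that each colon ideal
`(u 0, …, u (j-1)) : u j` is generated by variables. -/
def HasLinearQuotients (J : Ideal (MvPolynomial σ K)) : Prop :=
  ∃ (m : ℕ) (u : Fin m → MvPolynomial σ K),
    (∀ i, ∃ s : σ →₀ ℕ, u i = MvPolynomial.monomial s 1) ∧
    (∀ i j, i ≠ j → ¬ u i ∣ u j) ∧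
    J = Ideal.span (Set.range u) ∧
    ∀ j : Fin m, 0 < (j : ℕ) →
      ∃ V : Set σ, Submodule.colon
          (Ideal.span {x | ∃ i : Fin m, (i : ℕ) < (j : ℕ) ∧ x = u i} :
            Submodule (MvPolynomial σ K) (MvPolynomial σ K))
          (Ideal.span {u j}) =
        Ideal.span (MvPolynomial.X '' V)

end IdealResolution
section StanleyReisner

variable (K : Type) [Field K] (nv : ℕ)

/-- The Stanley–Reisner ideal of a simplicial complex `Δ` on `Fin nv`:  generated by the
squarefree monomials corresponding to the non-faces of `Δ`. -/
noncomputable def srIdeal (Δ : Finset (Finset (Fin nv))) : Ideal (MvPolynomial (Fin nv) K) :=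
  Ideal.span ((fun F : Finset (Fin nv) => ∏ i ∈ F, MvPolynomial.X i) '' {F | F ∉ Δ})

/-- The Alexander dual complex `Δ^∨ = {F : [n] \ F ∉ Δ}`. -/
def dualComplex (Δ : Finset (Finset (Fin nv))) : Finset (Finset (Fin nv)) :=
  Finset.univ.filter fun F => (Finset.univ \ F) ∉ Δ

/-- `F` is a facet (a maximal face) of `Δ`. -/
def IsFacet (Δ : Finset (Finset (Fin nv))) (F : Finset (Fin nv)) : Prop :=
  F ∈ Δ ∧ ∀ G ∈ Δ, F ⊆ G → G = F

/-- `Δ` is shellable:  its facets admit an order `F₁, …, F_m` such that for all `i < j` the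
intersection `⟨F₁,…,F_{j-1}⟩ ∩ ⟨F_j⟩` is pure of dimension `dim F_j − 1`, equivalently
for all `i < j` there are `v ∈ F_j \ F_i` and `k < j` with `F_j \ F_k = {v}`. -/
def Shellable (Δ : Finset (Finset (Fin nv))) : Prop :=
  ∃ (m : ℕ) (Fs : Fin m → Finset (Fin nv)),
    Function.Injective Fs ∧
    (∀ i, IsFacet nv (Δ := Δ) (Fs i)) ∧
    (∀ F, IsFacet nv (Δ := Δ) F → ∃ i, Fs i = F) ∧
    (∀ i j : Fin m, i < j →
      ∃ v, v ∈ Fs j ∧ v ∉ Fs i ∧ ∃ k : Fin m, k < j ∧ Fs j \ Fs k = {v})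

end StanleyReisner
open MvPolynomial

variable (K : Type) [Field K] (nv : ℕ)

noncomputable def mexp (F : Finset (Fin nv)) : Fin nv →₀ ℕ := ∑ a ∈ F, Finsupp.single a 1

lemma mexp_apply (F : Finset (Fin nv)) (b : Fin nv) :
    mexp nv F b = if b ∈ F then 1 else 0 := by
  classical
  simp [mexp, Finsupp.finset_sum_apply, Finsupp.single_apply]

lemma mexp_le_iff (F G : Finset (Fin nv)) : mexp nv F ≤ mexp nv G ↔ F ⊆ G := by
  classical
  constructor
  · intro h a ha
    have := Finsupp.le_def.mp h a
    simp [mexp_apply, ha] at this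
    by_contra hb
    simp [hb] at this
  · intro h
    rw [Finsupp.le_def]
    intro a
    rw [mexp_apply, mexp_apply]
    by_cases ha : a ∈ F
    · simp [ha, h ha]
    · simp [ha]

lemma prod_X_eq (F : Finset (Fin nv)) :
    (∏ i ∈ F, (X i : MvPolynomial (Fin nv) K)) = monomial (mexp nv F) 1 := by
  classical
  induction F using Finset.induction with
  | empty => simp [mexp]
  | insert _ _ h ih =>
    rw [Finset.prod_insert h, ih, show mexp nv (insert _ _) = Finsupp.single _ 1 + mexp nv _ from
      Finset.sum_insert h, X, monomial_mul, one_mul]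

lemma monomial_dvd_of_le {s t : Fin nv →₀ ℕ} (h : s ≤ t) :
    (monomial s (1:K)) ∣ monomial t 1 :=
  ⟨monomial (t - s) 1, by rw [monomial_mul, one_mul, add_tsub_cancel_of_le h]⟩

lemma monomial_mem_span_image {T : Set (Fin nv →₀ ℕ)} {t : Fin nv →₀ ℕ} :
    monomial t (1:K) ∈ Ideal.span ((fun s => monomial s (1:K)) '' T) ↔ ∃ s ∈ T, s ≤ t := by
  rw [mem_ideal_span_monomial_image]
  constructor
  · intro h
    exact h t (by simp [mem_support_iff, coeff_monomial])
  · rintro ⟨s, hs, hst⟩ xi hxi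
    have : xi = t := by
      by_contra hne
      simp [mem_support_iff, coeff_monomial, Ne.symm hne] at hxi
    exact ⟨s, hs, this ▸ hst⟩

lemma exists_facet (Δ : Finset (Finset (Fin nv))) {G : Finset (Fin nv)} (hG : G ∈ Δ) :
    ∃ F, IsFacet nv Δ F ∧ G ⊆ F := by
  classical
  obtain ⟨F, hF, hmax⟩ := Finset.exists_max_image (Δ.filter (G ⊆ ·)) Finset.card
    ⟨G, Finset.mem_filter.mpr ⟨hG, Finset.Subset.refl G⟩⟩
  rw [Finset.mem_filter] at hF
  refine ⟨F, ⟨hF.1, ?_⟩, hF.2⟩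
  intro H hH hFH
  have hHf : H ∈ Δ.filter (G ⊆ ·) := Finset.mem_filter.mpr ⟨hH, hF.2.trans hFH⟩
  exact (Finset.eq_of_subset_of_card_le hFH (hmax H hHf)).symm

lemma srIdeal_dual_eq (Δ : Finset (Finset (Fin nv))) :
    srIdeal K nv (dualComplex nv Δ) =
      Ideal.span ((fun s => MvPolynomial.monomial s (1:K)) ''
        (mexp nv '' {F | Finset.univ \ F ∈ Δ})) := by
  rw [srIdeal, Set.image_image]
  congr 1
  have h1 : {F : Finset (Fin nv) | F ∉ dualComplex nv Δ} = {F | Finset.univ \ F ∈ Δ} := by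
    ext F; simp [dualComplex]
  rw [h1]
  exact Set.image_congr fun F _ => prod_X_eq K nv F

lemma monomial_mem_srIdeal_dual (Δ : Finset (Finset (Fin nv))) {t : Fin nv →₀ ℕ} :
    MvPolynomial.monomial t (1:K) ∈ srIdeal K nv (dualComplex nv Δ) ↔
      ∃ F : Finset (Fin nv), Finset.univ \ F ∈ Δ ∧ mexp nv F ≤ t := by
  rw [srIdeal_dual_eq, monomial_mem_span_image]
  constructor
  · rintro ⟨s, ⟨F, hF, rfl⟩, hle⟩; exact ⟨F, hF, hle⟩
  · rintro ⟨F, hF, hle⟩; exact ⟨mexp nv F, ⟨F, hF, rfl⟩, hle⟩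


/-- If the Alexander dual `I_Δ^∨ = I_{Δ^∨}` of the Stanley–Reisner
ideal of a simplicial complex `Δ` has linear quotients, then `Δ` is shellable. -/
theorem shellable_of_dual_linearQuotients (K : Type) [Field K] (nv : ℕ)
    (Δ : Finset (Finset (Fin nv))) (hΔ : ∀ F ∈ Δ, ∀ G ⊆ F, G ∈ Δ)
    (hlq : HasLinearQuotients (Fin nv) (srIdeal K nv (dualComplex nv Δ))) :
    Shellable nv Δ := by
  classical
  obtain ⟨m, u, hmon, hdvd, hspan, hcolon⟩ := hlq
  choose s hs using hmon
  have hrange : Set.range u = (fun t => MvPolynomial.monomial t (1:K)) '' Set.range s := by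
    ext x
    constructor
    · rintro ⟨i, rfl⟩; exact ⟨s i, ⟨i, rfl⟩, (hs i).symm⟩
    · rintro ⟨t, ⟨i, rfl⟩, rfl⟩; exact ⟨i, hs i⟩
  have humem : ∀ t : Fin nv →₀ ℕ,
      MvPolynomial.monomial t (1:K) ∈ Ideal.span (Set.range u) ↔ ∃ k, s k ≤ t := by
    intro t
    rw [hrange, monomial_mem_span_image]
    constructor
    · rintro ⟨_, ⟨k, rfl⟩, h⟩; exact ⟨k, h⟩
    · rintro ⟨k, h⟩; exact ⟨s k, ⟨k, rfl⟩, h⟩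
  have claim1 : ∀ i : Fin m, ∃ G, IsFacet nv Δ G ∧ s i = mexp nv (Finset.univ \ G) := by
    intro i
    have hui : u i ∈ Ideal.span (Set.range u) := Ideal.subset_span (Set.mem_range_self i)
    rw [← hspan, hs i] at hui
    obtain ⟨F, hF, hle⟩ := (monomial_mem_srIdeal_dual K nv Δ).mp hui
    obtain ⟨G, hGfac, hsub⟩ := exists_facet nv Δ hF
    have h2 : Finset.univ \ G ⊆ F := by
      intro a ha
      rw [Finset.mem_sdiff] at ha
      by_contra haF
      exact ha.2 (hsub (Finset.mem_sdiff.mpr ⟨Finset.mem_univ a, haF⟩))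
    have h3 : mexp nv (Finset.univ \ G) ≤ s i := ((mexp_le_iff nv _ _).mpr h2).trans hle
    have hcompl : Finset.univ \ (Finset.univ \ G) = G := by simp
    have h4 : MvPolynomial.monomial (mexp nv (Finset.univ \ G)) (1:K) ∈
        srIdeal K nv (dualComplex nv Δ) :=
      (monomial_mem_srIdeal_dual K nv Δ).mpr ⟨Finset.univ \ G, by rw [hcompl]; exact hGfac.1,
        le_refl _⟩
    rw [hspan] at h4
    obtain ⟨k, hk⟩ := (humem _).mp h4
    have hki : u k ∣ u i := by
      rw [hs k, hs i]; exact monomial_dvd_of_le K nv (hk.trans h3)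
    have hkeq : k = i := by by_contra hne; exact hdvd k i hne hki
    subst hkeq
    exact ⟨G, hGfac, le_antisymm hk h3⟩
  choose G hGfac hsG using claim1
  refine ⟨m, G, ?_, hGfac, ?_, ?_⟩
  · intro i j h
    by_contra hne
    exact hdvd i j hne (dvd_of_eq (by rw [hs i, hs j, hsG i, hsG j, h]))
  · intro F hF
    have hcompl : Finset.univ \ (Finset.univ \ F) = F := by simp
    have h4 : MvPolynomial.monomial (mexp nv (Finset.univ \ F)) (1:K) ∈
        srIdeal K nv (dualComplex nv Δ) :=
      (monomial_mem_srIdeal_dual K nv Δ).mpr ⟨Finset.univ \ F, by rw [hcompl]; exact hF.1,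
        le_refl _⟩
    rw [hspan] at h4
    obtain ⟨k, hk⟩ := (humem _).mp h4
    rw [hsG k, mexp_le_iff] at hk
    have hFk : F ⊆ G k := by
      intro a haF
      by_contra hak
      exact (Finset.mem_sdiff.mp (hk (Finset.mem_sdiff.mpr ⟨Finset.mem_univ a, hak⟩))).2 haF
    exact ⟨k, hF.2 (G k) (hGfac k).1 hFk⟩
  · intro i j hij
    have hijn : (i:ℕ) < (j:ℕ) := hij
    obtain ⟨V, hV⟩ := hcolon j (Nat.lt_of_le_of_lt (Nat.zero_le _) hijn)
    have hLset : {x : MvPolynomial (Fin nv) K | ∃ k : Fin m, (k:ℕ) < (j:ℕ) ∧ x = u k} =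
        (fun t => MvPolynomial.monomial t (1:K)) ''
          {t | ∃ k : Fin m, (k:ℕ) < (j:ℕ) ∧ t = s k} := by
      ext x
      constructor
      · rintro ⟨k, hk, rfl⟩; exact ⟨s k, ⟨k, hk, rfl⟩, (hs k).symm⟩
      · rintro ⟨t, ⟨k, hk, rfl⟩, rfl⟩; exact ⟨k, hk, (hs k).symm⟩
    -- Step A
    have hDle : s i ≤ mexp nv (G j \ G i) + s j := by
      rw [hsG i, hsG j, Finsupp.le_def]
      intro a
      rw [Finsupp.add_apply, mexp_apply, mexp_apply, mexp_apply]
      by_cases hai : a ∈ G i <;> by_cases haj : a ∈ G j <;>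
        simp [Finset.mem_sdiff, hai, haj]
    have hwL : MvPolynomial.monomial (mexp nv (G j \ G i)) (1:K) * u j ∈
        Ideal.span {x : MvPolynomial (Fin nv) K | ∃ k : Fin m, (k:ℕ) < (j:ℕ) ∧ x = u k} := by
      rw [hs j, MvPolynomial.monomial_mul, one_mul]
      obtain ⟨c, hc⟩ := monomial_dvd_of_le K nv hDle
      rw [hc]
      exact Ideal.mul_mem_right _ _ (Ideal.subset_span ⟨i, hijn, (hs i).symm⟩)
    have hwV : MvPolynomial.monomial (mexp nv (G j \ G i)) (1:K) ∈
        Ideal.span (MvPolynomial.X '' V) := by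
      rw [← hV, Ideal.mem_colon_span_singleton]
      exact hwL
    obtain ⟨vv, hvV, hvne⟩ := MvPolynomial.mem_ideal_span_X_image.mp hwV (mexp nv (G j \ G i))
      (by simp [MvPolynomial.mem_support_iff, MvPolynomial.coeff_monomial])
    have hvD : vv ∈ G j \ G i := by
      by_contra h
      rw [mexp_apply] at hvne
      simp [h] at hvne
    -- Step B
    have hXv : (MvPolynomial.X vv : MvPolynomial (Fin nv) K) ∈
        Ideal.span (MvPolynomial.X '' V) := Ideal.subset_span ⟨vv, hvV, rfl⟩
    rw [← hV, Ideal.mem_colon_span_singleton] at hXv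
    rw [hs j, show (MvPolynomial.X vv : MvPolynomial (Fin nv) K) *
        MvPolynomial.monomial (s j) 1 =
        MvPolynomial.monomial (Finsupp.single vv 1 + s j) (1:K) from by
      rw [MvPolynomial.X, MvPolynomial.monomial_mul, one_mul]] at hXv
    rw [hLset] at hXv
    obtain ⟨t, ⟨k, hkj, rfl⟩, hkle⟩ := (monomial_mem_span_image K nv).mp hXv
    have hknej : k ≠ j := by
      intro h; subst h; exact absurd hkj (lt_irrefl _)
    rw [hsG k, hsG j] at hkle
    have hsub : G j \ G k ⊆ {vv} := by
      intro a ha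
      rw [Finset.mem_sdiff] at ha
      have h1 := Finsupp.le_def.mp hkle a
      rw [Finsupp.add_apply, mexp_apply, mexp_apply, Finsupp.single_apply,
        if_pos (Finset.mem_sdiff.mpr ⟨Finset.mem_univ a, ha.2⟩),
        if_neg (fun hmem => (Finset.mem_sdiff.mp hmem).2 ha.1)] at h1
      rw [Finset.mem_singleton]
      by_contra hne
      rw [if_neg (fun h => hne h.symm)] at h1
      omega
    have hvGk : vv ∉ G k := by
      intro hvk
      have hempty : G j \ G k = ∅ := by
        rw [Finset.eq_empty_iff_forall_notMem]
        intro a ha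
        have h2 := hsub ha
        rw [Finset.mem_singleton] at h2
        subst h2
        exact (Finset.mem_sdiff.mp ha).2 hvk
      have hsubk : G j ⊆ G k := Finset.sdiff_eq_empty_iff_subset.mp hempty
      have hGkj : G k = G j := (hGfac j).2 (G k) (hGfac k).1 hsubk
      exact hdvd k j hknej (dvd_of_eq (by rw [hs k, hs j, hsG k, hsG j, hGkj]))
    refine ⟨vv, (Finset.mem_sdiff.mp hvD).1, (Finset.mem_sdiff.mp hvD).2, k, hkj, ?_⟩
    exact Finset.Subset.antisymm hsub (Finset.singleton_subset_iff.mpr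
      (Finset.mem_sdiff.mpr ⟨(Finset.mem_sdiff.mp hvD).1, hvGk⟩))
end
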